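/- Let m ≥ 1, Tr the absolute trace of 𝔽_{2^m} over 𝔽_2, d a positive integer, and let Υ₁ = { r² + r : r ∈ 𝔽_{2^m}^* } \ {0}. Define S₄(a,b) = Σ_{x ∈ 𝔽_{2^m}^*} Σ_{y ∈ 𝔽_{2^m}^*} (−1)^{Tr(x^{d+2} y + x^{d+1} y) + Tr(a x^d y + b x)}. Then: (i) if a = 0 and b ≠ 0, S₄ = 2^m + 1 when Tr(b) = 0 and S₄ = −2^m + 1 when Tr(b) = 1; (ii) if a ∈ Υ₁ and b = 0, S₄ = 2^m + 1; (iii) if a ≠ 0, a ∉ Υ₁ and b = 0, S₄ = −2^m + 1; (iv) if a ≠ 0, a ∉ Υ₁ and b ≠ 0, S₄ = 1; (v) if a ∈ Υ₁, b ≠ 0 and Tr(b) = 1, S₄ = 1; (vi) if a ∈ Υ₁, b ≠ 0 and Tr(b) = 0, then S₄ = 2^{m+1} + 1 or S₄ = −2^{m+1} + 1. -/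
import Mathlib

open Finset
open scoped Classical

variable {F : Type*} [Field F] [Fintype F] [Algebra (ZMod 2) F]

noncomputable def Tr (z : F) : ZMod 2 := Algebra.trace (ZMod 2) F z

noncomputable def chi (z : F) : ℤ := (-1) ^ (Tr z).val

/-- membership in Υ₁ = { r² + r : r ∈ F* } \ {0}. -/
def Ups1 (a : F) : Prop := a ≠ 0 ∧ ∃ r : F, r ≠ 0 ∧ a = r ^ 2 + r

noncomputable def S4 (d : ℕ) (a b : F) : ℤ :=
  ∑ x ∈ univ.filter (fun x : F => x ≠ 0), ∑ y ∈ univ.filter (fun y : F => y ≠ 0),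
    chi (x ^ (d + 2) * y + x ^ (d + 1) * y) * chi (a * x ^ d * y + b * x)

lemma Tr_add (u v : F) : Tr (u + v) = Tr u + Tr v := map_add _ u v

lemma Tr_zero : Tr (0 : F) = 0 := map_zero _

lemma chi_zero : chi (0 : F) = 1 := by simp [chi, Tr_zero]

lemma chi_add (u v : F) : chi (u + v) = chi u * chi v := by
  unfold chi
  rw [Tr_add]
  have : ∀ s t : ZMod 2, ((-1 : ℤ)) ^ (s + t).val = (-1) ^ s.val * (-1) ^ t.val := by decide
  exact this _ _

lemma chi_one_or (u : F) : chi u = 1 ∨ chi u = -1 := by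
  unfold chi
  rcases Nat.even_or_odd (Tr u).val with h | h
  · left; exact h.neg_one_pow
  · right; exact h.neg_one_pow

lemma charF : CharP F 2 := charP_of_injective_ringHom (algebraMap (ZMod 2) F).injective 2

lemma exists_tr_one : ∃ t : F, Tr t = 1 := by
  haveI : Fact (Nat.Prime 2) := ⟨by norm_num⟩
  haveI : FiniteDimensional (ZMod 2) F := Module.Finite.of_finite
  haveI : CharP F 2 := charF
  haveI : Algebra.IsSeparable (ZMod 2) F := by infer_instance
  exact Algebra.trace_surjective (ZMod 2) F 1

lemma sum_chi : ∑ z : F, chi z = 0 := by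
  obtain ⟨t, ht⟩ := exists_tr_one (F := F)
  have h1 : ∑ z : F, chi z = ∑ z : F, chi (z + t) :=
    (Fintype.sum_equiv (Equiv.addRight t) (fun z => chi (z + t)) chi (fun z => rfl)).symm
  have h2 : ∀ z : F, chi (z + t) = - chi z := by
    intro z; rw [chi_add]; unfold chi; rw [ht]
    have hv : ((1 : ZMod 2)).val = 1 := rfl
    rw [hv]; ring
  have h3 : ∑ z : F, chi (z + t) = - ∑ z : F, chi z := by
    simp only [h2, Finset.sum_neg_distrib]
  linarith

lemma sum_chi_mul (c : F) (hc : c ≠ 0) : ∑ z : F, chi (c * z) = 0 := by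
  rw [Fintype.sum_equiv (Equiv.mulLeft₀ c hc) (fun z => chi (c * z)) chi (fun z => rfl)]
  exact sum_chi

lemma innerSumChi (c : F) :
    ∑ y ∈ univ.filter (fun y : F => y ≠ 0), chi (c * y)
      = if c = 0 then (Fintype.card F : ℤ) - 1 else -1 := by
  have hfe : univ.filter (fun y : F => y ≠ 0) = (univ : Finset F).erase 0 :=
    Finset.filter_ne' _ _
  have hsplit : chi (c * 0) + ∑ y ∈ univ.filter (fun y : F => y ≠ 0), chi (c * y)
      = ∑ y : F, chi (c * y) := by
    rw [hfe]; exact Finset.add_sum_erase univ (fun y : F => chi (c * y)) (mem_univ (0 : F))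
  rw [mul_zero, chi_zero] at hsplit
  by_cases hc : c = 0
  · subst hc
    rw [if_pos rfl]
    have h2 : ∑ y : F, chi ((0 : F) * y) = (Fintype.card F : ℤ) := by
      simp [chi_zero]
    linarith
  · rw [if_neg hc]
    have h2 := sum_chi_mul c hc
    linarith

lemma S4_eq (d : ℕ) (a b : F) :
    S4 d a b = ∑ x ∈ univ.filter (fun x : F => x ≠ 0),
      chi (b * x) * (if x ^ 2 + x + a = 0 then (Fintype.card F : ℤ) - 1 else -1) := by
  unfold S4
  apply Finset.sum_congr rfl
  intro x hx
  have hx0 : x ≠ 0 := by simpa using hx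
  have harg : ∀ y : F, chi (x ^ (d + 2) * y + x ^ (d + 1) * y) * chi (a * x ^ d * y + b * x)
      = chi ((x ^ d * (x ^ 2 + x + a)) * y) * chi (b * x) := by
    intro y
    rw [← chi_add, ← chi_add]
    congr 1
    ring
  simp only [harg]
  rw [← Finset.sum_mul, innerSumChi]
  have hiff : (x ^ d * (x ^ 2 + x + a) = 0) ↔ (x ^ 2 + x + a = 0) := by
    constructor
    · intro h
      rcases mul_eq_zero.mp h with h | h
      · exact absurd h (pow_ne_zero d hx0)
      · exact h
    · intro h; rw [h, mul_zero]
  rw [mul_comm]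
  congr 1
  simp only [hiff]

lemma sum_ite_split (d : ℕ) (a b : F) :
    S4 d a b = (Fintype.card F : ℤ) *
        (∑ x ∈ univ.filter (fun x : F => x ≠ 0 ∧ x ^ 2 + x + a = 0), chi (b * x))
      - ∑ x ∈ univ.filter (fun x : F => x ≠ 0), chi (b * x) := by
  rw [S4_eq]
  have : ∀ x : F, chi (b * x) * (if x ^ 2 + x + a = 0 then (Fintype.card F : ℤ) - 1 else -1)
      = (if x ^ 2 + x + a = 0 then (Fintype.card F : ℤ) * chi (b * x) else 0) - chi (b * x) := by
    intro x
    by_cases h : x ^ 2 + x + a = 0 <;> simp [h] <;> ring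
  simp only [this]
  rw [Finset.sum_sub_distrib]
  congr 1
  rw [Finset.sum_ite, Finset.sum_const_zero, add_zero, ← Finset.mul_sum]
  congr 1
  rw [Finset.filter_filter]

theorem stmt5 (m d : ℕ) (hm : 1 ≤ m) (hd : 1 ≤ d) (hF : Fintype.card F = 2 ^ m)
    (a b : F) :
    (a = 0 → b ≠ 0 →
      ((Tr b = 0 → S4 d a b = (2 ^ m : ℤ) + 1) ∧
       (Tr b = 1 → S4 d a b = -(2 ^ m : ℤ) + 1))) ∧
    (Ups1 a → b = 0 → S4 d a b = (2 ^ m : ℤ) + 1) ∧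
    (a ≠ 0 → ¬ Ups1 a → b = 0 → S4 d a b = -(2 ^ m : ℤ) + 1) ∧
    (a ≠ 0 → ¬ Ups1 a → b ≠ 0 → S4 d a b = 1) ∧
    (Ups1 a → b ≠ 0 → Tr b = 1 → S4 d a b = 1) ∧
    (Ups1 a → b ≠ 0 → Tr b = 0 →
      S4 d a b = (2 ^ (m + 1) : ℤ) + 1 ∨ S4 d a b = -(2 ^ (m + 1) : ℤ) + 1) := by
  haveI : CharP F 2 := charF
  have htwo : (2 : F) = 0 := by exact_mod_cast CharP.cast_eq_zero F 2
  have hq : (Fintype.card F : ℤ) = 2 ^ m := by exact_mod_cast hF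
  have hchar : ∀ z : F, z + z = 0 := by
    intro z
    have h : (2 : F) * z = 0 := by rw [htwo, zero_mul]
    calc z + z = 2 * z := by ring
      _ = 0 := h
  have chi_of_tr0 : ∀ u : F, Tr u = 0 → chi u = 1 := by
    intro u hu; unfold chi; rw [hu]; rfl
  have chi_of_tr1 : ∀ u : F, Tr u = 1 → chi u = -1 := by
    intro u hu; unfold chi; rw [hu]; rfl
  -- root set for a ∈ Υ₁
  have hpair : ∀ r : F, r ≠ 0 → r ^ 2 + r ≠ 0 →
      univ.filter (fun x : F => x ≠ 0 ∧ x ^ 2 + x + (r ^ 2 + r) = 0) = {r, r + 1} := by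
    intro r hr0 ha0
    have hr1 : r + 1 ≠ 0 := by
      intro h
      apply ha0
      have hr : r = 1 := by
        calc r = r + (1 + 1) := by rw [hchar 1, add_zero]
          _ = (r + 1) + 1 := by ring
          _ = 1 := by rw [h, zero_add]
      rw [hr, one_pow]; exact hchar 1
    have hfac : ∀ x : F, x ^ 2 + x + (r ^ 2 + r) = (x + r) * (x + r + 1) := by
      intro x
      have h : (x + r) * (x + r + 1) = x ^ 2 + x + (r ^ 2 + r) + 2 * (x * r) := by ring
      rw [h, htwo, zero_mul, add_zero]
    ext x
    simp only [mem_filter, mem_univ, true_and, mem_insert, mem_singleton]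
    constructor
    · rintro ⟨hx0, hx⟩
      rw [hfac x] at hx
      rcases mul_eq_zero.mp hx with h | h
      · left
        calc x = (x + r) + r := by rw [add_assoc, hchar r, add_zero]
          _ = r := by rw [h, zero_add]
      · right
        calc x = (x + r + 1) + r + 1 := by
              rw [show (x + r + 1) + r + 1 = x + (r + r) + (1 + 1) by ring,
                hchar r, hchar 1, add_zero, add_zero]
          _ = r + 1 := by rw [h, zero_add]
    · rintro (h | h)
      · rw [h]
        refine ⟨hr0, ?_⟩
        rw [hfac, hchar r, zero_mul]
      · rw [h]
        refine ⟨hr1, ?_⟩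
        rw [hfac]
        have : (r + 1) + r + 1 = 0 := by
          rw [show (r + 1) + r + 1 = (r + r) + (1 + 1) by ring, hchar r, hchar 1, add_zero]
        rw [this, mul_zero]
    -- end hpair
  -- empty root set when a ≠ 0 and a ∉ Υ₁
  have hempty : a ≠ 0 → ¬ Ups1 a →
      univ.filter (fun x : F => x ≠ 0 ∧ x ^ 2 + x + a = 0) = ∅ := by
    intro ha0 hnu
    rw [Finset.filter_eq_empty_iff]
    rintro x - ⟨hx0, hx⟩
    apply hnu
    refine ⟨ha0, x, hx0, ?_⟩
    linear_combination hx - (x ^ 2 + x) * htwo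
  refine ⟨?_, ?_, ?_, ?_, ?_, ?_⟩
  · -- (i) a = 0, b ≠ 0
    intro ha hb; subst ha
    have hR : univ.filter (fun x : F => x ≠ 0 ∧ x ^ 2 + x + (0 : F) = 0) = {(1 : F)} := by
      ext x
      simp only [mem_filter, mem_univ, true_and, mem_singleton, add_zero]
      constructor
      · rintro ⟨hx0, hx⟩
        have hfac : x * (x + 1) = 0 := by rw [← hx]; ring
        rcases mul_eq_zero.mp hfac with h | h
        · exact absurd h hx0
        · calc x = x + (1 + 1) := by rw [hchar 1, add_zero]
            _ = (x + 1) + 1 := by ring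
            _ = 1 := by rw [h, zero_add]
      · rintro rfl
        exact ⟨one_ne_zero, by rw [one_pow]; exact hchar 1⟩
    have hS : S4 d 0 b = (Fintype.card F : ℤ) * chi b + 1 := by
      rw [sum_ite_split, hR, Finset.sum_singleton, mul_one, innerSumChi, if_neg hb]
      ring
    constructor
    · intro htr; rw [hS, chi_of_tr0 b htr, hq]; ring
    · intro htr; rw [hS, chi_of_tr1 b htr, hq]; ring
  · -- (ii) Ups1 a, b = 0
    rintro ⟨ha0, r, hr0, rfl⟩ rfl
    have hR := hpair r hr0 ha0
    rw [sum_ite_split, hR, innerSumChi, if_pos rfl]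
    have hne : r ≠ r + 1 := fun h => (one_ne_zero : (1 : F) ≠ 0) (left_eq_add.mp h)
    rw [Finset.sum_pair hne, zero_mul, zero_mul, chi_zero]
    rw [hq]; ring
  · -- (iii) a ≠ 0, ¬Ups1 a, b = 0
    intro ha0 hnu hb; subst hb
    rw [sum_ite_split, hempty ha0 hnu, Finset.sum_empty, innerSumChi, if_pos rfl, hq]
    ring
  · -- (iv) a ≠ 0, ¬Ups1 a, b ≠ 0
    intro ha0 hnu hb
    rw [sum_ite_split, hempty ha0 hnu, Finset.sum_empty, innerSumChi, if_neg hb]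
    ring
  · -- (v) Ups1 a, b ≠ 0, Tr b = 1
    rintro ⟨ha0, r, hr0, rfl⟩ hb htr
    have hR := hpair r hr0 ha0
    rw [sum_ite_split, hR, innerSumChi, if_neg hb]
    have hne : r ≠ r + 1 := fun h => (one_ne_zero : (1 : F) ≠ 0) (left_eq_add.mp h)
    rw [Finset.sum_pair hne]
    have h2 : chi (b * (r + 1)) = chi (b * r) * chi b := by
      rw [show b * (r + 1) = b * r + b by ring, chi_add]
    rw [h2, chi_of_tr1 b htr]
    ring
  · -- (vi) Ups1 a, b ≠ 0, Tr b = 0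
    rintro ⟨ha0, r, hr0, rfl⟩ hb htr
    have hR := hpair r hr0 ha0
    rw [sum_ite_split, hR, innerSumChi, if_neg hb]
    have hne : r ≠ r + 1 := fun h => (one_ne_zero : (1 : F) ≠ 0) (left_eq_add.mp h)
    rw [Finset.sum_pair hne]
    have h2 : chi (b * (r + 1)) = chi (b * r) * chi b := by
      rw [show b * (r + 1) = b * r + b by ring, chi_add]
    rw [h2, chi_of_tr0 b htr, mul_one, hq]
    have hpow : (2 : ℤ) ^ (m + 1) = 2 ^ m * 2 := by rw [pow_succ]
    rcases chi_one_or (b * r) with h | h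
    · left; rw [h, hpow]; ring
    · right; rw [h, hpow]; ring
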